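/- arXiv:2605.01702 — 3 statements merged into one kernel-verified Lean document; each statement's English description precedes it below -/
import Mathlib

section
/- Let p ≥ 2 and let 𝔽 denote the set of finite floating-point numbers with p mantissa bits (values of the form ±(1+i/2^p)·2^e). For any floating-point number x with 1 < x ≤ 2, there exists a floating-point number y with 1/2 < y ≤ 1 such that the correctly rounded (round-to-nearest-even) product x ⊗ y equals 1 + 2^{-p} (the successor of 1 in 𝔽). -/
open Real Set

namespace FPPaper

def emin (q : ℕ) : ℤ := -(2:ℤ)^(q-1) + 2
def emax (q : ℕ) : ℤ := (2:ℤ)^(q-1) - 1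

/-- The set of finite floating-point numbers with `p` mantissa bits and `q` exponent bits. -/
def Fset (p q : ℕ) : Set ℝ :=
  {x | ∃ (s : ℝ) (i : ℕ) (e : ℤ), (s = 1 ∨ s = -1) ∧ i ≤ 2^p - 1 ∧
    ((emin q ≤ e ∧ e ≤ emax q ∧ x = s * (1 + (i : ℝ) / 2^p) * (2:ℝ)^e) ∨
     x = s * ((i : ℝ) / 2^p) * (2:ℝ)^(emin q))}

/-- `x` is an even float: the mantissa integer `i` in its representation is even. -/
def EvenFP (p q : ℕ) (x : ℝ) : Prop :=
  ∃ (s : ℝ) (i : ℕ) (e : ℤ), (s = 1 ∨ s = -1) ∧ i ≤ 2^p - 1 ∧ 2 ∣ i ∧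
    ((emin q ≤ e ∧ e ≤ emax q ∧ x = s * (1 + (i : ℝ) / 2^p) * (2:ℝ)^e) ∨
     x = s * ((i : ℝ) / 2^p) * (2:ℝ)^(emin q))

/-- `rnd` is correct round-to-nearest with ties to even, into `Fset p q`. -/
def RoundNE (p q : ℕ) (rnd : ℝ → ℝ) : Prop :=
  ∀ x : ℝ,
    rnd x ∈ Fset p q ∧
    (∀ y ∈ Fset p q, |x - rnd x| ≤ |x - y|) ∧
    (∀ y ∈ Fset p q, y ≠ rnd x → |x - y| = |x - rnd x| → EvenFP p q (rnd x))

/-- `y` is the successor of `x` in `Fset p q`. -/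
def IsSucc (p q : ℕ) (x y : ℝ) : Prop :=
  y ∈ Fset p q ∧ x < y ∧ ∀ z ∈ Fset p q, x < z → y ≤ z

/-- `e` is the binary exponent of the float `x`. -/
def HasExp (p q : ℕ) (x : ℝ) (e : ℤ) : Prop :=
  ((2:ℝ)^(emin q) ≤ |x| ∧ emin q ≤ e ∧ e ≤ emax q ∧ (2:ℝ)^e ≤ |x| ∧ |x| < (2:ℝ)^(e+1)) ∨
  (|x| < (2:ℝ)^(emin q) ∧ e = emin q)

/-- Left-associated iterated rounded sum `0 ⊕ v ⊕ v ⊕ ⋯ ⊕ v` (`n` terms of `v`). -/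
def iterAdd (rnd : ℝ → ℝ) (v : ℝ) : ℕ → ℝ
  | 0 => 0
  | n+1 => rnd (iterAdd rnd v n + v)

/-- Left-associated iterated rounded product of `x` by `w`, `n` times. -/
def iterMul (rnd : ℝ → ℝ) (w : ℝ) (x : ℝ) : ℕ → ℝ
  | 0 => x
  | n+1 => rnd (iterMul rnd w x n * w)

lemma rnd_fix {p q : ℕ} {rnd : ℝ → ℝ} (h : RoundNE p q rnd) {z : ℝ} (hz : z ∈ Fset p q) :
    rnd z = z := by
  have h1 := (h z).2.1 z hz
  simp only [sub_self, abs_zero] at h1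
  have := abs_nonpos_iff.mp h1
  linarith [this]

lemma emin_le {q : ℕ} (hq : 4 ≤ q) : emin q ≤ -6 := by
  unfold emin
  have : (8:ℤ) ≤ 2^(q-1) := by
    calc (8:ℤ) = 2^3 := by norm_num
    _ ≤ 2^(q-1) := pow_le_pow_right₀ (by norm_num) (by omega)
  linarith

lemma emax_ge {q : ℕ} (hq : 4 ≤ q) : (7:ℤ) ≤ emax q := by
  unfold emax
  have : (8:ℤ) ≤ 2^(q-1) := by
    calc (8:ℤ) = 2^3 := by norm_num
    _ ≤ 2^(q-1) := pow_le_pow_right₀ (by norm_num) (by omega)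
  linarith

lemma onePlus_mem (p q : ℕ) (hp : 2 ≤ p) (hq : 4 ≤ q) :
    (1 + 1/(2:ℝ)^p) ∈ Fset p q := by
  refine ⟨1, 1, 0, Or.inl rfl, ?_, Or.inl ⟨by linarith [emin_le hq], by linarith [emax_ge hq], ?_⟩⟩
  · have : 4 ≤ 2^p := by
      calc 4 = 2^2 := by norm_num
      _ ≤ 2^p := Nat.pow_le_pow_right (by norm_num) hp
    omega
  · push_cast
    rw [zpow_zero]
    ring

lemma uniq (p q : ℕ) (hp : 2 ≤ p) (hq : 4 ≤ q) {f : ℝ} (hf : f ∈ Fset p q)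
    (h1 : 1 < f) (h2 : f < 1 + 2/(2:ℝ)^p) : f = 1 + 1/(2:ℝ)^p := by
  have hN : (4:ℝ) ≤ 2^p := by
    calc (4:ℝ) = 2^2 := by norm_num
    _ ≤ 2^p := by exact pow_le_pow_right₀ (by norm_num) hp
  have hNpos : (0:ℝ) < 2^p := by positivity
  obtain ⟨s, k, e, hs, hk, hcase⟩ := hf
  have h2p1 : 1 ≤ 2^p := Nat.one_le_two_pow
  have hkR : (k:ℝ) ≤ 2^p - 1 := by
    have h' : k + 1 ≤ 2^p := by omega
    have := (Nat.cast_le (α := ℝ)).mpr h'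
    push_cast at this
    linarith
  have hknn : (0:ℝ) ≤ (k:ℝ) := Nat.cast_nonneg k
  have hf2 : f < 2 := by
    have hhalf : 2/(2:ℝ)^p ≤ 1/2 := by
      rw [div_le_div_iff₀ hNpos (by norm_num : (0:ℝ) < 2)]; linarith
    linarith
  rcases hs with rfl | rfl
  · rcases hcase with ⟨he1, he2, hxe⟩ | hxe
    · -- normal, s = 1
      have hzpos : (0:ℝ) < (2:ℝ)^e := zpow_pos (by norm_num) e
      have hle : (2:ℝ)^e ≤ f := by
        rw [hxe]
        nlinarith [mul_nonneg (div_nonneg hknn hNpos.le) hzpos.le]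
      have helt : e < 1 := by
        have : (2:ℝ)^e < (2:ℝ)^(1:ℤ) := by rw [zpow_one]; linarith
        exact_mod_cast (zpow_lt_zpow_iff_right₀ (by norm_num : (1:ℝ) < 2)).mp this
      have hub : f < (2:ℝ)^(e+1) := by
        have hz : (2:ℝ)^(e+1) = 2 * 2^e := by rw [zpow_add_one₀ (by norm_num : (2:ℝ) ≠ 0)]; ring
        rw [hxe, hz]
        have hm2 : 1 + (k:ℝ)/2^p < 2 := by
          have : (k:ℝ)/2^p < 1 := by rw [div_lt_one hNpos]; linarith
          linarith
        nlinarith [mul_lt_mul_of_pos_right hm2 hzpos]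
      have hege : 0 ≤ e := by
        have : (2:ℝ)^(0:ℤ) < (2:ℝ)^(e+1) := by rw [zpow_zero]; linarith
        have := (zpow_lt_zpow_iff_right₀ (by norm_num : (1:ℝ) < 2)).mp this
        omega
      have he0 : e = 0 := by omega
      subst he0
      rw [zpow_zero, mul_one, one_mul] at hxe
      have hk1 : k = 1 := by
        have hkpos : 0 < k := by
          by_contra h
          push_neg at h
          interval_cases k
          simp at hxe
          linarith
        have hklt : (k:ℝ) < 2 := by
          rw [hxe] at h2
          have : (k:ℝ)/2^p < 2/2^p := by linarith
          have := (div_lt_div_iff_of_pos_right hNpos).mp this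
          linarith
        have : k < 2 := by exact_mod_cast hklt
        omega
      rw [hxe, hk1]
      norm_num
    · -- subnormal, s = 1 : f ≤ 1, contradiction
      exfalso
      have he : emin q ≤ -6 := emin_le hq
      have hz1 : (2:ℝ)^(emin q) ≤ 1 := zpow_le_one_of_nonpos₀ (by norm_num) (by omega)
      have hzpos : (0:ℝ) < (2:ℝ)^(emin q) := zpow_pos (by norm_num) _
      have hle1 : (k:ℝ)/2^p ≤ 1 := by rw [div_le_one hNpos]; linarith
      have : f ≤ 1 := by
        rw [hxe]
        nlinarith
      linarith
  · -- s = -1 : f ≤ 0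
    exfalso
    rcases hcase with ⟨_, _, hxe⟩ | hxe
    · have hzpos : (0:ℝ) < (2:ℝ)^e := zpow_pos (by norm_num) e
      have hnn : (0:ℝ) ≤ (1 + (k:ℝ)/2^p) * 2^e :=
        mul_nonneg (by positivity) hzpos.le
      have : f ≤ 0 := by rw [hxe]; nlinarith [hnn]
      linarith
    · have hzpos : (0:ℝ) < (2:ℝ)^(emin q) := zpow_pos (by norm_num) _
      have hnn : (0:ℝ) ≤ ((k:ℝ)/2^p) * 2^(emin q) :=
        mul_nonneg (by positivity) hzpos.le
      have : f ≤ 0 := by rw [hxe]; nlinarith [hnn]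
      linarith

lemma repr_x (p q : ℕ) (hp : 2 ≤ p) (hq : 4 ≤ q) {x : ℝ} (hx : x ∈ Fset p q)
    (h1 : 1 < x) (h2 : x ≤ 2) :
    x = 2 ∨ ∃ i : ℕ, 1 ≤ i ∧ i ≤ 2^p - 1 ∧ x = 1 + (i:ℝ)/2^p := by
  have hN : (4:ℝ) ≤ 2^p := by
    calc (4:ℝ) = 2^2 := by norm_num
    _ ≤ 2^p := by exact pow_le_pow_right₀ (by norm_num) hp
  have hNpos : (0:ℝ) < 2^p := by positivity
  obtain ⟨s, k, e, hs, hk, hcase⟩ := hx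
  have h2p1 : 1 ≤ 2^p := Nat.one_le_two_pow
  have hkR : (k:ℝ) ≤ 2^p - 1 := by
    have h' : k + 1 ≤ 2^p := by omega
    have := (Nat.cast_le (α := ℝ)).mpr h'
    push_cast at this
    linarith
  have hknn : (0:ℝ) ≤ (k:ℝ) := Nat.cast_nonneg k
  rcases hs with rfl | rfl
  · rcases hcase with ⟨he1, he2, hxe⟩ | hxe
    · -- normal, s = 1
      have hzpos : (0:ℝ) < (2:ℝ)^e := zpow_pos (by norm_num) e
      have hle : (2:ℝ)^e ≤ x := by
        rw [hxe]
        nlinarith [mul_nonneg (div_nonneg hknn hNpos.le) hzpos.le]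
      have helt : e ≤ 1 := by
        have : (2:ℝ)^e ≤ (2:ℝ)^(1:ℤ) := by rw [zpow_one]; linarith
        exact_mod_cast (zpow_le_zpow_iff_right₀ (by norm_num : (1:ℝ) < 2)).mp this
      have hub : x < (2:ℝ)^(e+1) := by
        have hz : (2:ℝ)^(e+1) = 2 * 2^e := by rw [zpow_add_one₀ (by norm_num : (2:ℝ) ≠ 0)]; ring
        rw [hxe, hz]
        have hm2 : 1 + (k:ℝ)/2^p < 2 := by
          have : (k:ℝ)/2^p < 1 := by rw [div_lt_one hNpos]; linarith
          linarith
        nlinarith [mul_lt_mul_of_pos_right hm2 hzpos]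
      have hege : 0 ≤ e := by
        have : (2:ℝ)^(0:ℤ) < (2:ℝ)^(e+1) := by rw [zpow_zero]; linarith
        have := (zpow_lt_zpow_iff_right₀ (by norm_num : (1:ℝ) < 2)).mp this
        omega
      interval_cases e
      · -- e = 0 : x = 1 + k/2^p
        rw [zpow_zero, mul_one, one_mul] at hxe
        right
        refine ⟨k, ?_, hk, hxe⟩
        by_contra h
        push_neg at h
        interval_cases k
        simp at hxe
        linarith
      · -- e = 1 : x = 2, k = 0
        left
        rw [zpow_one, one_mul] at hxe
        have hk0 : (k:ℝ)/2^p ≤ 0 := by nlinarith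
        have hk0' : (k:ℝ)/2^p = 0 := le_antisymm hk0 (div_nonneg hknn hNpos.le)
        rw [hxe, hk0']
        ring
    · -- subnormal, s = 1 : x ≤ 1, contradiction
      exfalso
      have he : emin q ≤ -6 := emin_le hq
      have hz1 : (2:ℝ)^(emin q) ≤ 1 := zpow_le_one_of_nonpos₀ (by norm_num) (by omega)
      have hzpos : (0:ℝ) < (2:ℝ)^(emin q) := zpow_pos (by norm_num) _
      have hle1 : (k:ℝ)/2^p ≤ 1 := by rw [div_le_one hNpos]; linarith
      have : x ≤ 1 := by rw [hxe]; nlinarith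
      linarith
  · exfalso
    rcases hcase with ⟨_, _, hxe⟩ | hxe
    · have hzpos : (0:ℝ) < (2:ℝ)^e := zpow_pos (by norm_num) e
      have hnn : (0:ℝ) ≤ (1 + (k:ℝ)/2^p) * 2^e := mul_nonneg (by positivity) hzpos.le
      have : x ≤ 0 := by rw [hxe]; nlinarith [hnn]
      linarith
    · have hzpos : (0:ℝ) < (2:ℝ)^(emin q) := zpow_pos (by norm_num) _
      have hnn : (0:ℝ) ≤ ((k:ℝ)/2^p) * 2^(emin q) := mul_nonneg (by positivity) hzpos.le
      have : x ≤ 0 := by rw [hxe]; nlinarith [hnn]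
      linarith

lemma key_nat (N i : ℕ) (hN : 4 ≤ N) (hi2 : 2 ≤ i) (hiN : i + 1 ≤ N) :
    ∃ m : ℕ, N < m ∧ m < 2*N ∧ m - N ≤ N - 1 ∧
      2*N^2 + N < (N+i)*m ∧ (N+i)*m < 2*N^2 + 3*N := by
  set K := N + i with hK
  set M := 2*N^2 + N with hM
  have hKpos : 0 < K := by omega
  have hd := Nat.div_add_mod M K
  have hr := Nat.mod_lt M hKpos
  set d := M / K with hdd
  set r := M % K with hrr
  have hmul : K * (d+1) = K*d + K := by ring
  have h1 : M < K*(d+1) := by rw [hmul]; linarith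
  have h2 : K*(d+1) ≤ M + K := by rw [hmul]; linarith
  have hNN : N^2 = N*N := pow_two N
  have hNd : N < d + 1 := by
    by_contra h
    push_neg at h
    have ha : K*(d+1) ≤ K*N := Nat.mul_le_mul_left K h
    have hb : (K+1)*N ≤ (2*N)*N := Nat.mul_le_mul_right N (by omega)
    have hc : (K+1)*N = K*N + N := by ring
    have hd2 : (2*N)*N = 2*(N*N) := by ring
    have hM2 : M = 2*(N*N) + N := by rw [hM, hNN]
    linarith
  have h2Nd : d + 1 < 2*N := by
    by_contra h
    push_neg at h
    have hKle : K ≤ 2*N := by omega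
    have ha : K*(2*N) ≤ K*(d+1) := Nat.mul_le_mul_left K h
    have hb : (N+2)*(2*N) ≤ K*(2*N) := Nat.mul_le_mul_right (2*N) (by omega)
    have hc : (N+2)*(2*N) = 2*(N*N) + 4*N := by ring
    have hM2 : M = 2*(N*N) + N := by rw [hM, hNN]
    linarith
  have hKlt : K + 1 ≤ 2*N := by omega
  refine ⟨d + 1, hNd, h2Nd, by omega, h1, ?_⟩
  have hfin : M + K < 2*N^2 + 3*N := by
    calc M + K = 2*N^2 + N + K := by rw [hM]
    _ < 2*N^2 + N + 2*N := by omega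
    _ = 2*N^2 + 3*N := by ring
  exact lt_of_le_of_lt h2 hfin

theorem stmt_0 (p q : ℕ) (hp : 2 ≤ p) (hq : 4 ≤ q) (hpq : p ≤ 2^(q-2))
    (rnd : ℝ → ℝ) (hrnd : RoundNE p q rnd)
    (x : ℝ) (hx : x ∈ Fset p q) (hx1 : 1 < x) (hx2 : x ≤ 2) :
    ∃ y ∈ Fset p q, 1/2 < y ∧ y ≤ 1 ∧ rnd (x * y) = 1 + (2:ℝ)^(-(p:ℤ)) := by
  have hN : (4:ℝ) ≤ 2^p := by
    calc (4:ℝ) = 2^2 := by norm_num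
    _ ≤ 2^p := by exact pow_le_pow_right₀ (by norm_num) hp
  have hNpos : (0:ℝ) < 2^p := by positivity
  have hN4 : 4 ≤ 2^p := by
    calc 4 = 2^2 := by norm_num
    _ ≤ 2^p := Nat.pow_le_pow_right (by norm_num) hp
  have hpow : (1:ℝ) + (2:ℝ)^(-(p:ℤ)) = 1 + 1/2^p := by
    rw [zpow_neg, zpow_natCast]; ring
  have hhalf : (2:ℝ)^(-1:ℤ) = 1/2 := by norm_num
  have heminle : emin q ≤ -6 := emin_le hq
  have hemaxge : (7:ℤ) ≤ emax q := emax_ge hq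
  rw [hpow]
  rcases repr_x p q hp hq hx hx1 hx2 with hx2' | ⟨i, hi1, hi2, hxe⟩
  · -- x = 2
    refine ⟨(1 + 1/2^p)/2, ⟨1, 1, -1, Or.inl rfl, by omega, Or.inl ⟨by omega, by omega, ?_⟩⟩,
      by linarith [one_div_pos.mpr hNpos], ?_, ?_⟩
    · push_cast
      rw [hhalf]
      ring
    · have : 1/(2:ℝ)^p ≤ 1 := by rw [div_le_one hNpos]; linarith
      linarith
    · have hxy : x * ((1 + 1/2^p)/2) = 1 + 1/(2:ℝ)^p := by rw [hx2']; ring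
      rw [hxy]
      exact rnd_fix hrnd (onePlus_mem p q hp hq)
  rcases Nat.lt_or_ge i 2 with hi2' | hi2'
  · -- i = 1 : y = 1
    have hieq : i = 1 := by omega
    subst hieq
    refine ⟨1, ⟨1, 0, 0, Or.inl rfl, by omega, Or.inl ⟨by omega, by omega, by norm_num⟩⟩,
      by norm_num, le_refl 1, ?_⟩
    rw [mul_one, hxe]
    push_cast
    exact rnd_fix hrnd (onePlus_mem p q hp hq)
  · -- 2 ≤ i
    obtain ⟨m, hmN, hm2N, hjb, hlo, hhi⟩ := key_nat (2^p) i hN4 hi2' (by omega)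
    have hmNR : (2:ℝ)^p < (m:ℝ) := by exact_mod_cast hmN
    have hm2NR : (m:ℝ) < 2*2^p := by exact_mod_cast hm2N
    have hloR : 2*((2:ℝ)^p)^2 + 2^p < ((2:ℝ)^p + i)*m := by exact_mod_cast hlo
    have hhiR : ((2:ℝ)^p + i)*m < 2*((2:ℝ)^p)^2 + 3*2^p := by exact_mod_cast hhi
    set y : ℝ := (m:ℝ)/(2*2^p) with hy
    have hymem : y ∈ Fset p q := by
      refine ⟨1, m - 2^p, -1, Or.inl rfl, hjb, Or.inl ⟨by omega, by omega, ?_⟩⟩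
      rw [Nat.cast_sub hmN.le, hhalf, hy]
      push_cast
      field_simp
      ring_nf
    have hc2 : (0:ℝ) < 2*((2:ℝ)^p)^2 := by positivity
    have hxyeq : x * y = (((2:ℝ)^p + i)*m)/(2*((2:ℝ)^p)^2) := by
      rw [hxe, hy]
      field_simp
    have hrel : (2:ℝ)/(2*2^p) = 1/2^p := by
      field_simp
    have heqlo : (1:ℝ) + 1/(2*(2:ℝ)^p) = (2*((2:ℝ)^p)^2 + 2^p)/(2*((2:ℝ)^p)^2) := by
      field_simp
    have heqhi : (1:ℝ) + 3/(2*(2:ℝ)^p) = (2*((2:ℝ)^p)^2 + 3*2^p)/(2*((2:ℝ)^p)^2) := by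
      field_simp
    have hxylo : 1 + 1/(2*(2:ℝ)^p) < x*y := by
      rw [heqlo, hxyeq]
      gcongr
    have hxyhi : x*y < 1 + 3/(2*(2:ℝ)^p) := by
      rw [heqhi, hxyeq]
      gcongr
    have hr1 : (1:ℝ)/(2*(2:ℝ)^p) = (1/2)*(1/2^p) := by ring
    have hr3 : (3:ℝ)/(2*(2:ℝ)^p) = (3/2)*(1/2^p) := by ring
    rw [hr1] at hxylo
    rw [hr3] at hxyhi
    obtain ⟨hfF, hnear, -⟩ := hrnd (x*y)
    have hb := hnear _ (onePlus_mem p q hp hq)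
    have habs : |x*y - (1 + 1/(2:ℝ)^p)| < (1/2)*(1/2^p) :=
      abs_lt.mpr ⟨by linarith, by linarith⟩
    have habs2 : |x*y - rnd (x*y)| < (1/2)*(1/2^p) := lt_of_le_of_lt hb habs
    obtain ⟨hl, hr⟩ := abs_lt.mp habs2
    have h1f : 1 < rnd (x*y) := by linarith
    have h2f : rnd (x*y) < 1 + 2/(2:ℝ)^p := by
      have h2e : (2:ℝ)/2^p = 2*(1/2^p) := by ring
      rw [h2e]
      linarith
    exact ⟨y, hymem, by rw [hy, lt_div_iff₀ (by positivity)]; linarith,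
      by rw [hy, div_le_one (by positivity)]; linarith,
      uniq p q hp hq hfF h1f h2f⟩

end FPPaper
end

section
/- Let x be a finite floating-point number and let e be a positive integer such that 2^{-e} is a finite float. If m = ⌈(2^q + p)/e⌉, then multiplying x by 2^{-e} a total of m times (with rounding after each multiplication) yields exactly 0. -/
open Real Set

namespace FPPaper

lemma zero_mem (p q : ℕ) : (0:ℝ) ∈ Fset p q :=
  ⟨1, 0, emin q, Or.inl rfl, Nat.zero_le _, Or.inr (by simp)⟩

lemma neg_mem (p q : ℕ) {x : ℝ} (hx : x ∈ Fset p q) : -x ∈ Fset p q := by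
  obtain ⟨s, i, e, hs, hi, hc⟩ := hx
  refine ⟨-s, i, e, ?_, hi, ?_⟩
  · rcases hs with h | h <;> simp [h]
  · rcases hc with ⟨h1, h2, h3⟩ | h3
    · exact Or.inl ⟨h1, h2, by rw [h3]; ring⟩
    · exact Or.inr (by rw [h3]; ring)

lemma pow2_mem (p q : ℕ) (hp : 1 ≤ p) (k : ℤ)
    (h1 : emin q - p ≤ k) (h2 : k ≤ emax q) : (2:ℝ)^k ∈ Fset p q := by
  by_cases hk : emin q ≤ k
  · exact ⟨1, 0, k, Or.inl rfl, Nat.zero_le _, Or.inl ⟨hk, h2, by simp⟩⟩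
  · push_neg at hk
    set j : ℕ := (k - emin q + p).toNat with hjdef
    have hj : (j : ℤ) = k - emin q + p := Int.toNat_of_nonneg (by omega)
    refine ⟨1, 2^j, emin q, Or.inl rfl, ?_, Or.inr ?_⟩
    · have hjp : j ≤ p - 1 := by omega
      have : 2^j ≤ 2^(p-1) := Nat.pow_le_pow_right (by norm_num) hjp
      have h2p : 2^(p-1) ≤ 2^p - 1 := by
        have : 2^(p-1) * 2 ≤ 2^p := by
          rw [← pow_succ]
          exact Nat.pow_le_pow_right (by norm_num) (by omega)
        omega
      omega
    · have : ((2^j : ℕ) : ℝ) / 2^p * (2:ℝ)^(emin q) = (2:ℝ)^k := by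
        push_cast
        rw [← zpow_natCast (2:ℝ) j, ← zpow_natCast (2:ℝ) p, ← zpow_sub₀ (two_ne_zero),
          ← zpow_add₀ (two_ne_zero)]
        congr 1
        omega
      rw [← this]; ring

lemma rnd_zero (p q : ℕ) (rnd : ℝ → ℝ) (hrnd : RoundNE p q rnd) : rnd 0 = 0 := by
  obtain ⟨-, hnear, -⟩ := hrnd 0
  have := hnear 0 (zero_mem p q)
  simp only [sub_zero, sub_self, abs_zero, zero_sub, abs_neg] at this
  simpa using abs_nonpos_iff.mp this

lemma rnd_abs_le (p q : ℕ) (hp : 1 ≤ p) (rnd : ℝ → ℝ) (hrnd : RoundNE p q rnd)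
    (k : ℤ) (h1 : emin q - p ≤ k) (h2 : k ≤ emax q)
    (y : ℝ) (hy : |y| ≤ (2:ℝ)^k) : |rnd y| ≤ (2:ℝ)^k := by
  obtain ⟨-, hnear, -⟩ := hrnd y
  have hub := hnear _ (pow2_mem p q hp k h1 h2)
  have hlb := hnear _ (neg_mem p q (pow2_mem p q hp k h1 h2))
  rw [abs_le] at hy ⊢
  constructor
  · by_contra h
    push_neg at h
    have hB : |y - (-(2:ℝ)^k)| = y + 2^k := by
      rw [sub_neg_eq_add]; exact abs_of_nonneg (by linarith [hy.1])
    have hC : y - rnd y ≤ |y - rnd y| := le_abs_self _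
    have := hlb
    rw [hB] at this
    linarith
  · by_contra h
    push_neg at h
    have hB : |y - (2:ℝ)^k| = 2^k - y := by
      rw [abs_sub_comm]; exact abs_of_nonneg (by linarith [hy.2])
    have hC : rnd y - y ≤ |y - rnd y| := by
      rw [abs_sub_comm]; exact le_abs_self _
    have := hub
    rw [hB] at this
    linarith

lemma abs_le_of_mem (p q : ℕ) {x : ℝ} (hx : x ∈ Fset p q) : |x| ≤ (2:ℝ)^(emax q + 1) := by
  have heme : emin q ≤ emax q + 1 := by
    have : (1:ℤ) ≤ 2^(q-1) := one_le_pow₀ one_le_two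
    simp only [emin, emax]; omega
  obtain ⟨s, i, e, hs, hi, hc⟩ := hx
  have hs1 : |s| = 1 := by rcases hs with h | h <;> simp [h]
  have hip : (i:ℝ) ≤ 2^p := by
    have : i ≤ 2^p := le_trans hi (Nat.sub_le _ _)
    exact_mod_cast this
  have h2p : (0:ℝ) < 2^p := by positivity
  rcases hc with ⟨h1, h2, h3⟩ | h3
  · rw [h3, abs_mul, abs_mul, hs1, one_mul]
    have ha : |1 + (i:ℝ)/2^p| ≤ 2 := by
      rw [abs_of_nonneg (by positivity)]
      have : (i:ℝ)/2^p ≤ 1 := by rw [div_le_one h2p]; exact hip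
      linarith
    have hb : |(2:ℝ)^e| = (2:ℝ)^e := abs_of_nonneg (by positivity)
    rw [hb]
    calc |1 + (i:ℝ)/2^p| * (2:ℝ)^e ≤ 2 * (2:ℝ)^e := by
          have : (0:ℝ) < (2:ℝ)^e := by positivity
          nlinarith
      _ ≤ 2 * (2:ℝ)^(emax q) := by
          have := zpow_le_zpow_right₀ (one_le_two (α := ℝ)) h2
          linarith
      _ = (2:ℝ)^(emax q + 1) := by rw [zpow_add_one₀ two_ne_zero]; ring
  · rw [h3, abs_mul, abs_mul, hs1, one_mul]
    have ha : |(i:ℝ)/2^p| ≤ 1 := by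
      rw [abs_of_nonneg (by positivity), div_le_one h2p]; exact hip
    have hb : |(2:ℝ)^(emin q)| = (2:ℝ)^(emin q) := abs_of_nonneg (by positivity)
    rw [hb]
    calc |(i:ℝ)/2^p| * (2:ℝ)^(emin q) ≤ 1 * (2:ℝ)^(emin q) := by
          have : (0:ℝ) < (2:ℝ)^(emin q) := by positivity
          nlinarith
      _ ≤ (2:ℝ)^(emax q + 1) := by
          rw [one_mul]; exact zpow_le_zpow_right₀ one_le_two heme

lemma small_char (p q : ℕ) (hp : 1 ≤ p) {z : ℝ} (hz : z ∈ Fset p q)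
    (hsmall : |z| ≤ (2:ℝ)^(emin q - p)) :
    z = 0 ∨ z = (2:ℝ)^(emin q - p) ∨ z = -(2:ℝ)^(emin q - p) := by
  set ω : ℝ := (2:ℝ)^(emin q - p) with hω
  obtain ⟨s, i, e, hs, hi, hc⟩ := hz
  have hs1 : |s| = 1 := by rcases hs with h | h <;> simp [h]
  have h2p : (0:ℝ) < 2^p := by positivity
  rcases hc with ⟨h1, h2, h3⟩ | h3
  · exfalso
    have hlt : ω < (2:ℝ)^(emin q) :=
      zpow_lt_zpow_right₀ one_lt_two (by omega)
    have hle : (2:ℝ)^(emin q) ≤ (2:ℝ)^e := zpow_le_zpow_right₀ one_le_two h1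
    have habs : (2:ℝ)^e ≤ |z| := by
      rw [h3, abs_mul, abs_mul, hs1, one_mul, abs_of_nonneg (by positivity : (0:ℝ) ≤ (2:ℝ)^e)]
      have : (1:ℝ) ≤ |1 + (i:ℝ)/2^p| := by
        rw [abs_of_nonneg (by positivity)]
        have : (0:ℝ) ≤ (i:ℝ)/2^p := by positivity
        linarith
      nlinarith [zpow_pos (by norm_num : (0:ℝ) < 2) e]
    linarith
  · have hiω : z = s * ((i:ℝ) * ω) := by
      rw [h3, hω]
      rw [zpow_sub₀ (two_ne_zero), zpow_natCast]
      ring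
    have habs : |z| = (i:ℝ) * ω := by
      rw [hiω, abs_mul, hs1, one_mul, abs_of_nonneg (by positivity)]
    have hωpos : (0:ℝ) < ω := by positivity
    have : (i:ℝ) * ω ≤ 1 * ω := by rw [one_mul, ← habs]; exact hsmall
    have hile : (i:ℝ) ≤ 1 := le_of_mul_le_mul_right this hωpos
    have : i ≤ 1 := by exact_mod_cast hile
    interval_cases i
    · left; rw [hiω]; simp
    · rcases hs with h | h
      · right; left; rw [hiω, h]; simp
      · right; right; rw [hiω, h]; simp

lemma not_even_omega (p q : ℕ) (hp : 1 ≤ p) {z : ℝ}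
    (hz : |z| = (2:ℝ)^(emin q - p)) : ¬ EvenFP p q z := by
  rintro ⟨s, i, e, hs, hi, hdvd, hc⟩
  have hs1 : |s| = 1 := by rcases hs with h | h <;> simp [h]
  have h2p : (0:ℝ) < 2^p := by positivity
  rcases hc with ⟨h1, h2, h3⟩ | h3
  · have hlt : (2:ℝ)^(emin q - p) < (2:ℝ)^(emin q) :=
      zpow_lt_zpow_right₀ one_lt_two (by omega)
    have hle : (2:ℝ)^(emin q) ≤ (2:ℝ)^e := zpow_le_zpow_right₀ one_le_two h1
    have habs : (2:ℝ)^e ≤ |z| := by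
      rw [h3, abs_mul, abs_mul, hs1, one_mul, abs_of_nonneg (by positivity : (0:ℝ) ≤ (2:ℝ)^e)]
      have : (1:ℝ) ≤ |1 + (i:ℝ)/2^p| := by
        rw [abs_of_nonneg (by positivity)]
        have : (0:ℝ) ≤ (i:ℝ)/2^p := by positivity
        linarith
      nlinarith [zpow_pos (by norm_num : (0:ℝ) < 2) e]
    linarith
  · set ω : ℝ := (2:ℝ)^(emin q - p) with hω
    have hωpos : (0:ℝ) < ω := by positivity
    have habs : |z| = (i:ℝ) * ω := by
      have hiω : z = s * ((i:ℝ) * ω) := by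
        rw [h3, hω, zpow_sub₀ (two_ne_zero), zpow_natCast]; ring
      rw [hiω, abs_mul, hs1, one_mul, abs_of_nonneg (by positivity)]
    rw [hz] at habs
    have : (i:ℝ) = 1 := by
      have h1' : (i:ℝ) * ω = 1 * ω := by rw [one_mul, ← habs]
      exact mul_right_cancel₀ (ne_of_gt hωpos) h1'
    have hi1 : i = 1 := by exact_mod_cast this
    rw [hi1] at hdvd
    omega

lemma rnd_small (p q : ℕ) (hp : 1 ≤ p) (rnd : ℝ → ℝ) (hrnd : RoundNE p q rnd)
    (y : ℝ) (hy : |y| ≤ (2:ℝ)^(emin q - p - 1)) : rnd y = 0 := by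
  set ω : ℝ := (2:ℝ)^(emin q - p) with hω
  have hω2 : (2:ℝ)^(emin q - p - 1) = ω / 2 := by
    rw [hω, zpow_sub_one₀ two_ne_zero]
    ring
  have hωpos : (0:ℝ) < ω := by positivity
  rw [hω2] at hy
  obtain ⟨hmem, hnear, htie⟩ := hrnd y
  have h0 : |y - rnd y| ≤ |y| := by simpa using hnear 0 (zero_mem p q)
  have habs : |rnd y| ≤ ω := by
    calc |rnd y| = |y - (y - rnd y)| := by ring_nf
      _ ≤ |y| + |y - rnd y| := abs_sub _ _
      _ ≤ |y| + |y| := by linarith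
      _ ≤ ω := by linarith
  rcases small_char p q hp hmem habs with h | h | h
  · exact h
  · exfalso
    rw [h, ← hω] at h0
    have hgey : ω - y ≤ |y - ω| := by
      rw [abs_sub_comm]; exact le_abs_self _
    have hyle : y ≤ |y| := le_abs_self _
    have hy2 : y = ω / 2 := le_antisymm (by linarith) (by linarith)
    have habs_y : |y| = ω / 2 := by rw [hy2, abs_of_nonneg (by linarith)]
    have habs_yω : |y - ω| = ω / 2 := by
      rw [hy2, abs_of_nonpos (by linarith)]; ring
    have hne : (0:ℝ) ≠ rnd y := by rw [h, ← hω]; exact ne_of_lt hωpos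
    have heq : |y - 0| = |y - rnd y| := by
      rw [sub_zero, h, ← hω, habs_yω, habs_y]
    have hev := htie 0 (zero_mem p q) hne heq
    rw [h] at hev
    exact not_even_omega p q hp (abs_of_pos hωpos) hev
  · exfalso
    rw [h, ← hω] at h0
    have hgey : y + ω ≤ |y - -ω| := by
      rw [sub_neg_eq_add]; exact le_abs_self _
    have hyge : -|y| ≤ y := neg_abs_le _
    have hy2 : y = -(ω / 2) := le_antisymm (by linarith) (by linarith)
    have habs_y : |y| = ω / 2 := by
      rw [hy2, abs_of_nonpos (by linarith)]; ring
    have habs_yω : |y - -ω| = ω / 2 := by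
      rw [sub_neg_eq_add, hy2, abs_of_nonneg (by linarith)]; ring
    have hne : (0:ℝ) ≠ rnd y := by
      rw [h, ← hω]
      intro hc
      exact absurd hc.symm (by exact ne_of_lt (by linarith))
    have heq : |y - 0| = |y - rnd y| := by
      rw [sub_zero, h, ← hω, habs_yω, habs_y]
    have hev := htie 0 (zero_mem p q) hne heq
    rw [h] at hev
    have : |-(2:ℝ)^(emin q - p)| = (2:ℝ)^(emin q - p) := by
      rw [abs_neg]; exact abs_of_pos hωpos
    exact not_even_omega p q hp this hev

theorem stmt_6 (p q : ℕ) (hp : 2 ≤ p) (hq : 4 ≤ q) (hpq : p ≤ 2^(q-2))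
    (rnd : ℝ → ℝ) (hrnd : RoundNE p q rnd)
    (x : ℝ) (hx : x ∈ Fset p q)
    (e : ℕ) (he : 1 ≤ e) (hef : (2:ℝ)^(-(e:ℤ)) ∈ Fset p q)
    (m : ℕ) (hm : (m : ℤ) = ⌈((2^q + p : ℚ)) / (e : ℚ)⌉) :
    iterMul rnd ((2:ℝ)^(-(e:ℤ))) x m = 0 := by
  set w : ℝ := (2:ℝ)^(-(e:ℤ)) with hw
  have hp1 : 1 ≤ p := by omega
  have he1 : (1:ℤ) ≤ (e:ℤ) := by exact_mod_cast he
  have hq1 : (8:ℤ) ≤ 2^(q-1) := by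
    calc (8:ℤ) = 2^3 := by norm_num
      _ ≤ 2^(q-1) := pow_le_pow_right₀ one_le_two (by omega)
  have h2q : (2:ℤ)^q = 2 * 2^(q-1) := by
    conv_lhs => rw [show q = (q-1)+1 by omega]
    rw [pow_succ]; ring
  have hem : (2:ℤ)^q + (p:ℤ) ≤ (e:ℤ) * (m:ℤ) := by
    have he0 : (0:ℚ) < (e:ℚ) := by
      have : 0 < e := he
      exact_mod_cast this
    have h1 : ((2^q + p : ℚ)) / (e:ℚ) ≤ ((m:ℤ):ℚ) := by
      rw [hm]; exact Int.le_ceil _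
    rw [div_le_iff₀ he0] at h1
    have h2 : ((2:ℚ)^q + (p:ℚ)) ≤ (e:ℚ) * (m:ℚ) := by push_cast at h1 ⊢; linarith
    exact_mod_cast h2
  have key : ∀ n : ℕ, iterMul rnd w x n = 0 ∨
      (|iterMul rnd w x n| ≤ (2:ℝ)^(emax q + 1 - (e:ℤ)*(n:ℤ)) ∧
        emin q - (p:ℤ) ≤ emax q + 1 - (e:ℤ)*(n:ℤ)) := by
    intro n
    induction n with
    | zero =>
      right
      refine ⟨by simpa [iterMul] using abs_le_of_mem p q hx, ?_⟩
      simp only [Nat.cast_zero, mul_zero, sub_zero, emin, emax]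
      have hp0 : (0:ℤ) ≤ (p:ℤ) := Int.ofNat_nonneg p
      have hpq' : (p:ℤ) ≤ 2^(q-2) := by exact_mod_cast hpq
      have h22 : (2:ℤ)^(q-2) ≤ 2^(q-1) := pow_le_pow_right₀ one_le_two (by omega)
      linarith
    | succ n ih =>
      have hstep : iterMul rnd w x (n+1) = rnd (iterMul rnd w x n * w) := rfl
      rcases ih with h0 | ⟨hb, hK⟩
      · left; rw [hstep, h0, zero_mul, rnd_zero p q rnd hrnd]
      · set K : ℤ := emax q + 1 - (e:ℤ)*(n:ℤ) with hKdef
        have hKe : emax q + 1 - (e:ℤ)*((n+1 : ℕ):ℤ) = K - (e:ℤ) := by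
          rw [hKdef]; push_cast; ring
        have hprod : |iterMul rnd w x n * w| ≤ (2:ℝ)^(K - (e:ℤ)) := by
          have hwpos : (0:ℝ) < (2:ℝ)^(-(e:ℤ)) := by positivity
          rw [abs_mul, hw, abs_of_pos hwpos,
            show K - (e:ℤ) = K + (-(e:ℤ)) by ring, zpow_add₀ two_ne_zero]
          exact mul_le_mul_of_nonneg_right hb (le_of_lt hwpos)
        by_cases hc : emin q - (p:ℤ) ≤ K - (e:ℤ)
        · right
          rw [hKe]
          have hen : (0:ℤ) ≤ (e:ℤ)*(n:ℤ) :=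
            mul_nonneg (by linarith) (Int.ofNat_nonneg n)
          have hKle : K - (e:ℤ) ≤ emax q := by rw [hKdef]; linarith
          exact ⟨by rw [hstep]; exact rnd_abs_le p q hp1 rnd hrnd _ hc hKle _ hprod, hc⟩
        · left
          push_neg at hc
          rw [hstep]
          apply rnd_small p q hp1 rnd hrnd
          refine le_trans hprod (zpow_le_zpow_right₀ one_le_two ?_)
          have := Int.add_one_le_iff.mpr hc
          linarith
  rcases key m with h | ⟨-, hK⟩
  · exact h
  · exfalso
    simp only [emin, emax] at hK
    linarith

end FPPaper
end

section
/- For the sigmoid function σ(x) = 1/(1+e^{−x}), the two-sided bound 4^x ≤ σ(x) ≤ 2^x holds for all x ≤ −2, and moreover 4^x ≤ σ'(x) ≤ 2^x for all x ≤ −2, where σ'(x) = σ(x)(1 − σ(x)). -/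
open Real

/-- Logistic sigmoid. -/
noncomputable def sigmoid (x : ℝ) : ℝ := 1 / (1 + Real.exp (-x))

set_option maxHeartbeats 1000000 in
theorem stmt_10 (x : ℝ) (hx : x ≤ -2) :
    ((4:ℝ)^x ≤ _root_.sigmoid x ∧ _root_.sigmoid x ≤ (2:ℝ)^x) ∧
    ((4:ℝ)^x ≤ _root_.sigmoid x * (1 - _root_.sigmoid x) ∧ _root_.sigmoid x * (1 - _root_.sigmoid x) ≤ (2:ℝ)^x) := by
  have hE : Real.exp 2 ≤ Real.exp (-x) := Real.exp_le_exp.mpr (by linarith)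
  set E := Real.exp (-x) with hEdef
  have hEpos : 0 < E := Real.exp_pos _
  have hden : 0 < 1 + E := by linarith
  have hs : _root_.sigmoid x = 1 / (1 + E) := rfl
  have he1 : Real.exp 1 < 2.7182818286 := Real.exp_one_lt_d9
  have he1' : 2.7182818283 < Real.exp 1 := Real.exp_one_gt_d9
  have he2eq : Real.exp 2 = Real.exp 1 * Real.exp 1 := by
    rw [← Real.exp_add]; norm_num
  have he2 : Real.exp 2 < 7.39 := by nlinarith [Real.exp_pos 1]
  have he2' : 7.3 < Real.exp 2 := by nlinarith [Real.exp_pos 1]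
  have hlog2 : Real.log 2 < 0.6931471808 := Real.log_two_lt_d9
  have hlog2' : 0.6931471803 < Real.log 2 := Real.log_two_gt_d9
  have hlog4 : Real.log 4 = 2 * Real.log 2 := by
    rw [show (4:ℝ) = 2 ^ 2 by norm_num, Real.log_pow]; push_cast; ring
  have h2x : (2:ℝ) ^ x = Real.exp (Real.log 2 * x) :=
    Real.rpow_def_of_pos (by norm_num) x
  have h4x : (4:ℝ) ^ x = Real.exp (Real.log 4 * x) :=
    Real.rpow_def_of_pos (by norm_num) x
  have hF : Real.exp x * E = 1 := by
    rw [hEdef, ← Real.exp_add]; simp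
  -- c = exp((log 4 - 1) * x) ≤ exp 2 / 16
  set c := Real.exp ((Real.log 4 - 1) * x) with hcdef
  have hcpos : 0 < c := Real.exp_pos _
  have hcle : c ≤ Real.exp 2 / 16 := by
    have h1 : (Real.log 4 - 1) * x ≤ (Real.log 4 - 1) * (-2) := by nlinarith
    have h2 : Real.exp ((Real.log 4 - 1) * (-2)) = Real.exp 2 / 16 := by
      have : (Real.log 4 - 1) * (-2) = 2 - 2 * Real.log 4 := by ring
      rw [this, Real.exp_sub]
      have : Real.exp (2 * Real.log 4) = 16 := by
        rw [two_mul, Real.exp_add, Real.exp_log (by norm_num : (0:ℝ) < 4)]; norm_num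
      rw [this]
    calc c ≤ Real.exp ((Real.log 4 - 1) * (-2)) := Real.exp_le_exp.mpr h1
      _ = Real.exp 2 / 16 := h2
  have h4split : Real.exp (Real.log 4 * x) = Real.exp x * c := by
    rw [hcdef, ← Real.exp_add]; ring_nf
  -- Lower bound: 4^x ≤ sigmoid x
  have hlow : (4:ℝ) ^ x ≤ _root_.sigmoid x := by
    rw [h4x, hs, le_div_iff₀ hden, h4split]
    -- exp x * c * (1 + E) ≤ 1 = exp x * E, multiply by E
    have key : c * (1 + E) ≤ E := by nlinarith
    nlinarith [Real.exp_pos x]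
  -- Upper bound: sigmoid x ≤ 2^x
  have hup : _root_.sigmoid x ≤ (2:ℝ) ^ x := by
    rw [h2x, hs, div_le_iff₀ hden]
    have key : (1:ℝ) ≤ Real.exp (Real.log 2 * x) * E := by
      rw [hEdef, ← Real.exp_add]
      have h0 : (0:ℝ) ≤ Real.log 2 * x + -x := by nlinarith
      calc (1:ℝ) = Real.exp 0 := (Real.exp_zero).symm
        _ ≤ Real.exp (Real.log 2 * x + -x) := Real.exp_le_exp.mpr h0
    nlinarith [Real.exp_pos (Real.log 2 * x)]
  -- sigma * (1 - sigma)
  have hsig_pos : 0 < _root_.sigmoid x := by rw [hs]; positivity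
  have hone_sub : 1 - _root_.sigmoid x = E / (1 + E) := by
    rw [hs]; field_simp; ring
  have hprod : _root_.sigmoid x * (1 - _root_.sigmoid x) = E / (1 + E) ^ 2 := by
    rw [hone_sub, hs, div_mul_div_comm, one_mul, sq]
  have hdup : _root_.sigmoid x * (1 - _root_.sigmoid x) ≤ (2:ℝ) ^ x := by
    have h1 : 1 - _root_.sigmoid x ≤ 1 := by rw [hone_sub]; rw [div_le_one hden]; linarith
    nlinarith
  have hdlow : (4:ℝ) ^ x ≤ _root_.sigmoid x * (1 - _root_.sigmoid x) := by
    rw [h4x, hprod, le_div_iff₀ (by positivity : (0:ℝ) < (1 + E) ^ 2), h4split]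
    -- exp x * c * (1+E)^2 ≤ E  ⇔  c * (1+E)^2 ≤ E^2 (multiply by E, exp x * E = 1)
    have h1 : 1 + E ≤ (8.3 / 7.3) * E := by nlinarith
    have h2 : (1 + E) ^ 2 ≤ (8.3 / 7.3) ^ 2 * E ^ 2 := by nlinarith
    have key : c * (1 + E) ^ 2 ≤ E ^ 2 := by nlinarith [mul_le_mul hcle h2 (by positivity) (by positivity : (0:ℝ) ≤ Real.exp 2 / 16), sq_nonneg E]
    nlinarith [Real.exp_pos x]
  exact ⟨⟨hlow, hup⟩, ⟨hdlow, hdup⟩⟩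
end
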